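/- Rank-2 periodicity of generalized C-matrices: let d = (3,1), B = [[0,-1],[1,0]], and define a sequence of pairs (C(t), B(t)) for t = 1,...,9 with C(1) = I, B(t) = (-1)^{t+1} B, where C(t+1) is obtained from C(t) by the generalized c-vector recursion in direction k_t, with k_t = 1 for odd t and k_t = 2 for even t: c'_{ij} = -c_{ik} for j = k, and c'_{ij} = c_{ij} + c_{ik}[d_k b_{kj}(t)]_+ + [-c_{ik}]_+ d_k b_{kj}(t) for j ≠ k. Then C(9) = I; in particular the intermediate matrices are C(2) = [[-1,0],[0,1]], C(3) = [[-1,0],[0,-1]], C(4) = [[1,-3],[0,-1]], C(5) = [[-2,3],[-1,1]], C(6) = [[2,-3],[1,-2]], C(7) = [[-1,3],[-1,2]], C(8) = [[1,0],[1,-1]]. -/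

import Mathlib

/-- `[x]₊ = max(x,0)`. -/
def ppart (x : ℤ) : ℤ := max x 0

/-- One step of the generalized `c`-vector recursion in direction `k`,
for degrees `d` and current exchange matrix `B`. -/
def gcMut (d : Fin 2 → ℤ) (B C : Matrix (Fin 2) (Fin 2) ℤ) (k : Fin 2) :
    Matrix (Fin 2) (Fin 2) ℤ :=
  fun i j => if j = k then -C i k
    else C i j + C i k * ppart (d k * B k j) + ppart (-(C i k)) * (d k * B k j)

/-- Rank-2 periodicity of generalized `C`-matrices for `d = (3,1)` and
`B = [[0,-1],[1,0]]` along the alternating mutation sequence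
`μ₁, μ₂, μ₁, μ₂, μ₁, μ₂, μ₁, μ₂` (with `B(t) = (-1)^{t+1} B`):
`C(9) = I`, with the stated intermediate matrices. -/
theorem rank2_c_matrix_periodicity :
    let d : Fin 2 → ℤ := ![3, 1]
    let B : Matrix (Fin 2) (Fin 2) ℤ := !![0, -1; 1, 0]
    let C1 : Matrix (Fin 2) (Fin 2) ℤ := 1
    let C2 := gcMut d B C1 0
    let C3 := gcMut d (-B) C2 1
    let C4 := gcMut d B C3 0
    let C5 := gcMut d (-B) C4 1
    let C6 := gcMut d B C5 0
    let C7 := gcMut d (-B) C6 1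
    let C8 := gcMut d B C7 0
    let C9 := gcMut d (-B) C8 1
    C9 = 1 ∧
    C2 = !![-1, 0; 0, 1] ∧
    C3 = !![-1, 0; 0, -1] ∧
    C4 = !![1, -3; 0, -1] ∧
    C5 = !![-2, 3; -1, 1] ∧
    C6 = !![2, -3; 1, -2] ∧
    C7 = !![-1, 3; -1, 2] ∧
    C8 = !![1, 0; 1, -1] := by
  intro d B C1 C2 C3 C4 C5 C6 C7 C8 C9
  have e : ∀ (B' C M : Matrix (Fin 2) (Fin 2) ℤ) (k : Fin 2),
      (∀ i j, gcMut d B' C k i j = M i j) → gcMut d B' C k = M := by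
    intro B' C M k h; ext i j; exact h i j
  have h2 : C2 = !![-1, 0; 0, 1] := by
    show gcMut d B C1 0 = _
    have : C1 = !![1,0;0,1] := by
      show (1 : Matrix (Fin 2) (Fin 2) ℤ) = _
      ext i j; fin_cases i <;> fin_cases j <;> simp [Matrix.one_apply]
    rw [this]; apply e; intro i j; fin_cases i <;> fin_cases j <;> decide
  have h3 : C3 = !![-1, 0; 0, -1] := by
    show gcMut d (-B) C2 1 = _; rw [h2]; apply e; intro i j; fin_cases i <;> fin_cases j <;> decide
  have h4 : C4 = !![1, -3; 0, -1] := by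
    show gcMut d B C3 0 = _; rw [h3]; apply e; intro i j; fin_cases i <;> fin_cases j <;> decide
  have h5 : C5 = !![-2, 3; -1, 1] := by
    show gcMut d (-B) C4 1 = _; rw [h4]; apply e; intro i j; fin_cases i <;> fin_cases j <;> decide
  have h6 : C6 = !![2, -3; 1, -2] := by
    show gcMut d B C5 0 = _; rw [h5]; apply e; intro i j; fin_cases i <;> fin_cases j <;> decide
  have h7 : C7 = !![-1, 3; -1, 2] := by
    show gcMut d (-B) C6 1 = _; rw [h6]; apply e; intro i j; fin_cases i <;> fin_cases j <;> decide
  have h8 : C8 = !![1, 0; 1, -1] := by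
    show gcMut d B C7 0 = _; rw [h7]; apply e; intro i j; fin_cases i <;> fin_cases j <;> decide
  have h9 : C9 = 1 := by
    show gcMut d (-B) C8 1 = _; rw [h8]
    have : (1 : Matrix (Fin 2) (Fin 2) ℤ) = !![1,0;0,1] := by
      ext i j; fin_cases i <;> fin_cases j <;> simp [Matrix.one_apply]
    rw [this]; apply e; intro i j; fin_cases i <;> fin_cases j <;> decide
  exact ⟨h9, h2, h3, h4, h5, h6, h7, h8⟩
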